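/- Let ω be a circle in ℝ² with center O and radius r > 0, let l be a line tangent to ω at a point T, and let X be a point on l with X ≠ T such that the second tangent line m from X to ω exists; let R be the point where m touches ω and let X' = 2R − X be the reflection of X across R (so X' lies on m with R the midpoint of X and X'). Then dist(O, X') = dist(O, X) and the oriented angle ∡ T O X' equals 3 times the oriented angle ∡ T O X (as angles modulo 2π). Consequently, in polar coordinates with pole O and axis along the ray from O through T, if X has azimuth φ then X' has polar coordinates (r·sec(φ), 3φ), i.e., X' lies on the Maclaurin trisectrix r = r·sec(θ/3). -/

import Mathlib

open MeasureTheory Real EuclideanGeometry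
open scoped RealInnerProductSpace

noncomputable section

instance : Fact (Module.finrank ℝ (EuclideanSpace ℝ (Fin 2)) = 2) :=
  ⟨finrank_euclideanSpace_fin⟩

instance : Module.Oriented ℝ (EuclideanSpace ℝ (Fin 2)) (Fin 2) :=
  ⟨(EuclideanSpace.basisFun (Fin 2) ℝ).toBasis.orientation⟩

/-- Characterisation of the Maclaurin trisectrix: let `ω` be the circle with centre `O` and
radius `r`, let `l` be the tangent line to `ω` at `T`, let `X ≠ T` be a point of `l`, let the
second tangent from `X` touch `ω` at `R`, and let `X'` be the reflection of `X` across `R`.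
Then `|OX'| = |OX| = r·sec φ` and `∡ T O X' = 3φ`, where `φ = ∡ T O X`; that is, `X'` lies
on the Maclaurin trisectrix with polar equation `r·sec (θ/3)` (pole `O`, axis the ray `OT`). -/
theorem maclaurin_trisectrix_characterisation
    (O T X R : EuclideanSpace ℝ (Fin 2)) (r : ℝ) (hr : 0 < r)
    (hT : dist O T = r)
    (hXl : ⟪X - T, T - O⟫ = 0)  -- `X` lies on the tangent line `l` to `ω` at `T`
    (hXT : X ≠ T)
    (hR : dist O R = r) (hRT : R ≠ T)
    (hXm : ⟪X - R, R - O⟫ = 0)  -- the second tangent `m` from `X` touches `ω` at `R`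
    (X' : EuclideanSpace ℝ (Fin 2)) (hX' : X' = (2 : ℝ) • R - X) :
    dist O X' = dist O X ∧
    ∡ T O X' = (3 : ℤ) • ∡ T O X ∧
    dist O X' = r / Real.cos (∡ T O X).toReal := by
  subst hX'
  set o : Orientation ℝ (EuclideanSpace ℝ (Fin 2)) (Fin 2) :=
    Module.Oriented.positiveOrientation with ho
  set u : EuclideanSpace ℝ (Fin 2) := T - O with hud
  set v : EuclideanSpace ℝ (Fin 2) := R - O with hvd
  set x : EuclideanSpace ℝ (Fin 2) := X - O with hxd
  set x' : EuclideanSpace ℝ (Fin 2) := (2 : ℝ) • v - x with hx'd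
  have hu : ‖u‖ = r := by rw [hud, ← norm_sub_rev, ← dist_eq_norm, hT]
  have hv : ‖v‖ = r := by rw [hvd, ← norm_sub_rev, ← dist_eq_norm, hR]
  have huu : ⟪u, u⟫ = r ^ 2 := by rw [real_inner_self_eq_norm_sq, hu]
  have hvv : ⟪v, v⟫ = r ^ 2 := by rw [real_inner_self_eq_norm_sq, hv]
  have hXTu : X - T = x - u := by rw [hxd, hud]; abel
  have hXRv : X - R = x - v := by rw [hxd, hvd]; abel
  have hxu : ⟪x, u⟫ = r ^ 2 := by
    have h0 : ⟪x - u, u⟫ = 0 := by rw [← hXTu]; exact hXl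
    rw [inner_sub_left] at h0; linarith [huu]
  have hxv : ⟪x, v⟫ = r ^ 2 := by
    have h0 : ⟪x - v, v⟫ = 0 := by rw [← hXRv]; exact hXm
    rw [inner_sub_left] at h0; linarith [hvv]
  have hux : ⟪u, x⟫ = r ^ 2 := by rw [real_inner_comm]; exact hxu
  have hvx : ⟪v, x⟫ = r ^ 2 := by rw [real_inner_comm]; exact hxv
  have hr2 : r ^ 2 ≠ 0 := pow_ne_zero _ hr.ne'
  have hune : u ≠ 0 := by intro h; rw [h, norm_zero] at hu; exact hr.ne hu
  have hvne : v ≠ 0 := by intro h; rw [h, norm_zero] at hv; exact hr.ne hv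
  have hxne : x ≠ 0 := by intro h; rw [h, inner_zero_left] at hxu; exact hr2 hxu.symm
  have hvx' : ⟪v, x'⟫ = r ^ 2 := by
    rw [hx'd, inner_sub_right, inner_smul_right]; rw [hvv, hvx]; ring
  have hx'ne : x' ≠ 0 := by intro h; rw [h, inner_zero_right] at hvx'; exact hr2 hvx'.symm
  -- area form facts
  have hduv : u - v ≠ 0 := by
    rw [sub_ne_zero]
    intro h
    rw [hud, hvd] at h
    exact hRT (sub_left_inj.mp h).symm
  have h1 : ⟪u - v, x⟫ = 0 := by rw [inner_sub_left, hux, hvx]; ring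
  have h2 : ⟪u - v, u + v⟫ = 0 := by
    rw [inner_sub_left, inner_add_right, inner_add_right, huu, hvv, real_inner_comm u v]; ring
  have hkey : o.areaForm (u + v) x = 0 := by
    have hid := o.inner_mul_areaForm_sub (u - v) (u + v) x
    have hn : ‖u - v‖ ^ 2 ≠ 0 := pow_ne_zero _ (norm_ne_zero_iff.2 hduv)
    have h0 : ‖u - v‖ ^ 2 * o.areaForm (u + v) x = 0 := by
      rw [← hid, h1, h2]; ring
    exact (mul_eq_zero.mp h0).resolve_left hn
  have hw : o.areaForm u x = o.areaForm x v := by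
    have hadd : o.areaForm (u + v) x = o.areaForm u x + o.areaForm v x := by
      simp [map_add]
    rw [hadd] at hkey
    rw [o.areaForm_swap x v]
    linarith
  have hwv : o.areaForm v x' = o.areaForm x v := by
    rw [hx'd, map_sub, LinearMap.map_smul]
    simp only [smul_eq_mul, o.areaForm_apply_self, mul_zero, zero_sub, o.areaForm_swap x v,
      neg_neg]
  -- kahler equalities
  have k1 : o.kahler u x = o.kahler x v := by
    rw [o.kahler_apply_apply, o.kahler_apply_apply, hux, hxv, hw]
  have k2 : o.kahler v x' = o.kahler x v := by
    rw [o.kahler_apply_apply, o.kahler_apply_apply, hvx', hxv, hwv]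
  -- oangle facts
  have e1 : o.oangle x v = o.oangle u x := by
    unfold Orientation.oangle; rw [k1]
  have e2 : o.oangle v x' = o.oangle u x := by
    unfold Orientation.oangle; rw [k2, ← k1]
  have hsum : o.oangle u x' = o.oangle u x + o.oangle u x + o.oangle u x := by
    rw [← o.oangle_add hune hvne hx'ne, ← o.oangle_add hune hxne hvne, e1, e2]
  -- norms
  have hxx' : ‖x'‖ = ‖x‖ := by
    have hsq : ⟪x', x'⟫ = ⟪x, x⟫ := by
      rw [hx'd]
      simp only [inner_sub_left, inner_sub_right, inner_smul_left, inner_smul_right,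
        RCLike.conj_to_real]
      rw [hvv, hvx, hxv]; ring
    rw [real_inner_self_eq_norm_sq, real_inner_self_eq_norm_sq] at hsq
    exact (pow_left_inj₀ (norm_nonneg _) (norm_nonneg _) two_ne_zero).mp hsq
  have hdX' : dist O ((2:ℝ) • R - X) = ‖x'‖ := by
    rw [dist_eq_norm, ← norm_neg]
    congr 1
    rw [hx'd, hvd, hxd]
    module
  have hdX : dist O X = ‖x‖ := by rw [dist_eq_norm, ← norm_sub_rev]
  -- the oangles in the statement
  have hoX : ∡ T O X = o.oangle u x := by
    rw [EuclideanGeometry.oangle]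
    congr 1
  have hoX' : ∡ T O ((2:ℝ) • R - X) = o.oangle u x' := by
    rw [EuclideanGeometry.oangle]
    have : ((2:ℝ) • R - X) -ᵥ O = x' := by
      rw [hx'd, hvd, hxd]
      simp only [vsub_eq_sub]
      module
    rw [this]
    congr 1
  refine ⟨by rw [hdX', hdX, hxx'], ?_, ?_⟩
  · rw [hoX', hoX, hsum]
    abel
  · rw [hdX', hxx', hoX]
    have hc : Real.cos (o.oangle u x).toReal = r / ‖x‖ := by
      rw [Real.Angle.cos_toReal, o.cos_oangle_eq_inner_div_norm_mul_norm hune hxne, hux, hu]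
      have hxpos : (0:ℝ) < ‖x‖ := norm_pos_iff.2 hxne
      field_simp
    rw [hc]
    have hxpos : (0:ℝ) < ‖x‖ := norm_pos_iff.2 hxne
    field_simp

end
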